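/- In an acyclic negotiation, the length of every occurrence sequence is at most the number of atoms; in particular no atom occurs more than once in any occurrence sequence from the initial marking, and acyclic negotiations have no livelocks. -/

import Mathlib

universe u v w

/-- A (distributed) negotiation over a finite set of agents, a type of atoms and a type
of result names.  `atoms` is the finite set of negotiation atoms, `n0`/`nf` the initial
and final atoms, `parties n` the parties of atom `n`, `results n` its finite set of
results, and `trans n p r` the set of atoms agent `p` is ready to engage in after the
outcome `(n, r)`. -/
structure Negotiation (Agent : Type u) (Atom : Type v) (Res : Type w)
    [Fintype Agent] [DecidableEq Agent] [DecidableEq Atom] [DecidableEq Res] where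
  atoms : Finset Atom
  n0 : Atom
  nf : Atom
  parties : Atom → Finset Agent
  results : Atom → Finset Res
  trans : Atom → Agent → Res → Finset Atom
  n0_mem : n0 ∈ atoms
  nf_mem : nf ∈ atoms
  parties_nonempty : ∀ n ∈ atoms, (parties n).Nonempty
  results_nonempty : ∀ n ∈ atoms, (results n).Nonempty
  parties_n0 : parties n0 = Finset.univ
  parties_nf : parties nf = Finset.univ
  trans_sub : ∀ n ∈ atoms, ∀ p ∈ parties n, ∀ r ∈ results n, trans n p r ⊆ atoms
  trans_parties : ∀ n ∈ atoms, ∀ p ∈ parties n, ∀ r ∈ results n, ∀ n' ∈ trans n p r, p ∈ parties n'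
  trans_empty_iff : ∀ n ∈ atoms, ∀ p ∈ parties n, ∀ r ∈ results n, (trans n p r = ∅ ↔ n = nf)
  on_path : ∀ n ∈ atoms,
    Relation.ReflTransGen (fun a b => ∃ p ∈ parties a, ∃ r ∈ results a, b ∈ trans a p r) n0 n ∧
    Relation.ReflTransGen (fun a b => ∃ p ∈ parties a, ∃ r ∈ results a, b ∈ trans a p r) n nf

namespace Negotiation

variable {Agent : Type u} {Atom : Type v} {Res : Type w}
variable [Fintype Agent] [DecidableEq Agent] [DecidableEq Atom] [DecidableEq Res]

/-- A marking assigns to each agent the set of atoms it is ready to engage in. -/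
def Marking (Agent : Type u) (Atom : Type v) : Type (max u v) := Agent → Finset Atom

/-- A marking enables an atom if every party of the atom is ready to engage in it. -/
def Enables (N : Negotiation Agent Atom Res) (x : Marking Agent Atom) (n : Atom) : Prop :=
  n ∈ N.atoms ∧ ∀ p ∈ N.parties n, n ∈ x p

/-- Small step: the occurrence of the outcome `o = (n, r)` from marking `x` yields `y`. -/
def StepTo (N : Negotiation Agent Atom Res) (x : Marking Agent Atom) (o : Atom × Res)
    (y : Marking Agent Atom) : Prop :=
  N.Enables x o.1 ∧ o.2 ∈ N.results o.1 ∧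
    ∀ p, y p = if p ∈ N.parties o.1 then N.trans o.1 p o.2 else x p

/-- Occurrence sequences: `Seq N x σ y` means the finite sequence of outcomes `σ`
can occur from marking `x` and leads to marking `y`. -/
inductive Seq (N : Negotiation Agent Atom Res) :
    Marking Agent Atom → List (Atom × Res) → Marking Agent Atom → Prop
  | nil (x : Marking Agent Atom) : Seq N x [] x
  | cons {x y z : Marking Agent Atom} {o : Atom × Res} {σ : List (Atom × Res)} :
      N.StepTo x o y → Seq N y σ z → Seq N x (o :: σ) z

/-- The initial marking. -/
def x0 (N : Negotiation Agent Atom Res) : Marking Agent Atom := fun _ => {N.n0}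

/-- The final marking. -/
def xf (_N : Negotiation Agent Atom Res) : Marking Agent Atom := fun _ => ∅

/-- A marking is reachable if some occurrence sequence leads to it from the initial marking. -/
def Reachable (N : Negotiation Agent Atom Res) (x : Marking Agent Atom) : Prop :=
  ∃ σ, N.Seq N.x0 σ x

/-- A large step is an occurrence sequence from the initial to the final marking. -/
def LargeStep (N : Negotiation Agent Atom Res) (σ : List (Atom × Res)) : Prop :=
  N.Seq N.x0 σ N.xf

/-- Soundness: every atom is enabled at some reachable marking, and from every
reachable marking the final marking is reachable. -/
def Sound (N : Negotiation Agent Atom Res) : Prop :=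
  (∀ n ∈ N.atoms, ∃ x, N.Reachable x ∧ N.Enables x n) ∧
  (∀ x, N.Reachable x → ∃ τ, N.Seq x τ N.xf)

/-- An agent is deterministic if it is never ready to engage in more than one atom. -/
def DeterministicAgent (N : Negotiation Agent Atom Res) (p : Agent) : Prop :=
  ∀ n ∈ N.atoms, n ≠ N.nf → p ∈ N.parties n → ∀ r ∈ N.results n, ∃ n', N.trans n p r = {n'}

/-- A negotiation is deterministic if all its agents are. -/
def Deterministic (N : Negotiation Agent Atom Res) : Prop := ∀ p, N.DeterministicAgent p

/-- Weak determinism: for every `(n, p, r)` there is a deterministic agent which is a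
party of every atom in `trans n p r`. -/
def WeaklyDeterministic (N : Negotiation Agent Atom Res) : Prop :=
  ∀ n ∈ N.atoms, ∀ p ∈ N.parties n, ∀ r ∈ N.results n,
    ∃ b, N.DeterministicAgent b ∧ ∀ n' ∈ N.trans n p r, b ∈ N.parties n'

/-- The edge relation of the graph of a negotiation. -/
def Edge (N : Negotiation Agent Atom Res) (a b : Atom) : Prop :=
  a ∈ N.atoms ∧ b ∈ N.atoms ∧ ∃ p ∈ N.parties a, ∃ r ∈ N.results a, b ∈ N.trans a p r

/-- A negotiation is acyclic if its graph has no cycles. -/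
def Acyclic (N : Negotiation Agent Atom Res) : Prop :=
  ∀ n, ¬ Relation.TransGen N.Edge n n

/-- The arc `(n, p, r, n')` occurs in the occurrence sequence `σ`. -/
def ArcOccursIn (N : Negotiation Agent Atom Res) (n : Atom) (p : Agent) (r : Res) (n' : Atom)
    (σ : List (Atom × Res)) : Prop :=
  ∃ (σ1 σ2 σ3 : List (Atom × Res)) (r' : Res), r' ∈ N.results n' ∧
    σ = σ1 ++ (n, r) :: σ2 ++ (n', r') :: σ3 ∧ ∀ o ∈ σ2, p ∉ N.parties o.1

/-- The outcome `(n, r)` unconditionally enables the atom `n'`. -/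
def UncondEnables (N : Negotiation Agent Atom Res) (n : Atom) (r : Res) (n' : Atom) : Prop :=
  N.parties n' ⊆ N.parties n ∧ ∀ p ∈ N.parties n', N.trans n p r = {n'}

/-- The outcome `(n, r)` has exclusive access to the atom `n'`. -/
def ExclusiveAccess (N : Negotiation Agent Atom Res) (n : Atom) (r : Res) (n' : Atom) : Prop :=
  ∀ p ∈ N.parties n', n' ∈ N.trans n p r ∧
    ∀ m ∈ N.atoms, ∀ r'' ∈ N.results m, (m, r'') ≠ (n, r) → n' ∉ N.trans m p r''

/-- The outcome `(m, r'')` commits to the atom `n'`. -/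
def CommitsTo (N : Negotiation Agent Atom Res) (m : Atom) (r'' : Res) (n' : Atom) : Prop :=
  ∃ p ∈ N.parties m, N.trans m p r'' = {n'}

/-- The merge rule: two results of a non-final atom with identical transition functions
are merged into a fresh result. -/
def MergeRule (N1 N2 : Negotiation Agent Atom Res) : Prop :=
  ∃ (n : Atom) (r1 r2 r : Res), n ∈ N1.atoms ∧ n ≠ N1.nf ∧
    r1 ∈ N1.results n ∧ r2 ∈ N1.results n ∧ r1 ≠ r2 ∧
    (∀ p ∈ N1.parties n, N1.trans n p r1 = N1.trans n p r2) ∧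
    r ∉ N1.results n ∧
    N2.atoms = N1.atoms ∧ N2.n0 = N1.n0 ∧ N2.nf = N1.nf ∧ N2.parties = N1.parties ∧
    N2.results n = insert r (((N1.results n).erase r1).erase r2) ∧
    (∀ m, m ≠ n → N2.results m = N1.results m) ∧
    (∀ p, N2.trans n p r = N1.trans n p r1) ∧
    (∀ p, ∀ r'' ∈ ((N1.results n).erase r1).erase r2, N2.trans n p r'' = N1.trans n p r'') ∧
    (∀ m, m ≠ n → N2.trans m = N1.trans m)

/-- The iteration rule: a result after which all parties return to the same atom is removed. -/
def IterationRule (N1 N2 : Negotiation Agent Atom Res) : Prop :=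
  ∃ (n : Atom) (r : Res), n ∈ N1.atoms ∧ r ∈ N1.results n ∧
    (∀ p ∈ N1.parties n, N1.trans n p r = {n}) ∧
    N2.atoms = N1.atoms ∧ N2.n0 = N1.n0 ∧ N2.nf = N1.nf ∧ N2.parties = N1.parties ∧
    N2.results n = (N1.results n).erase r ∧
    (∀ m, m ≠ n → N2.results m = N1.results m) ∧
    N2.trans = N1.trans

/-- The useless arc rule: under the guard consisting of three distinct arcs
`(n,p,r,n')`, `(n,p,r,n'')`, `(n,q,r,n')` with `trans n q r = {n'}`, the arc
`(n,p,r,n'')` is removed (and the result is again a negotiation, since `N2` is one). -/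
def UselessArcRule (N1 N2 : Negotiation Agent Atom Res) : Prop :=
  ∃ (n : Atom) (p q : Agent) (r : Res) (n' n'' : Atom),
    n ∈ N1.atoms ∧ p ∈ N1.parties n ∧ q ∈ N1.parties n ∧ r ∈ N1.results n ∧
    p ≠ q ∧ n' ≠ n'' ∧
    n' ∈ N1.trans n p r ∧ n'' ∈ N1.trans n p r ∧ N1.trans n q r = {n'} ∧
    N2.atoms = N1.atoms ∧ N2.n0 = N1.n0 ∧ N2.nf = N1.nf ∧
    N2.parties = N1.parties ∧ N2.results = N1.results ∧
    N2.trans n p r = (N1.trans n p r).erase n'' ∧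
    (∀ (m : Atom) (p' : Agent) (r' : Res), (m, p', r') ≠ (n, p, r) →
      N2.trans m p' r' = N1.trans m p' r')

/-- The shortcut rule applied to the outcome `(n, r)` which unconditionally enables `n'`,
using `f` to produce the fresh result names `r'_s = f r'`. -/
def ShortcutRuleAt (N1 N2 : Negotiation Agent Atom Res) (n : Atom) (r : Res) (n' : Atom)
    (f : Res → Res) : Prop :=
  n ∈ N1.atoms ∧ n' ∈ N1.atoms ∧ r ∈ N1.results n ∧ n' ≠ n ∧
  N1.UncondEnables n r n' ∧
  ((n' ≠ N1.nf ∧ N1.ExclusiveAccess n r n') ∨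
   (n' ≠ N1.nf ∧ ∃ (m : Atom) (r'' : Res), m ∈ N1.atoms ∧ r'' ∈ N1.results m ∧
      (m, r'') ≠ (n, r) ∧ N1.CommitsTo m r'' n') ∨
   (n' = N1.nf ∧ N1.ExclusiveAccess n r n' ∧ N1.results n = {r})) ∧
  Set.InjOn f ↑(N1.results n') ∧ (∀ r' ∈ N1.results n', f r' ∉ N1.results n) ∧
  N2.n0 = N1.n0 ∧ N2.parties = N1.parties ∧
  N2.results n = ((N1.results n).erase r) ∪ (N1.results n').image f ∧
  (∀ m, m ≠ n → N2.results m = N1.results m) ∧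
  (∀ r' ∈ N1.results n', ∀ p ∈ N1.parties n', N2.trans n p (f r') = N1.trans n' p r') ∧
  (∀ r' ∈ N1.results n', ∀ p ∈ N1.parties n, p ∉ N1.parties n' →
      N2.trans n p (f r') = N1.trans n p r) ∧
  (∀ r'' ∈ (N1.results n).erase r, ∀ p, N2.trans n p r'' = N1.trans n p r'') ∧
  (∀ m, m ≠ n → N2.trans m = N1.trans m) ∧
  (N1.ExclusiveAccess n r n' → N2.atoms = N1.atoms.erase n') ∧
  (¬ N1.ExclusiveAccess n r n' → N2.atoms = N1.atoms) ∧
  ((n' = N1.nf ∧ N1.ExclusiveAccess n r n') → N2.nf = n) ∧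
  (¬ (n' = N1.nf ∧ N1.ExclusiveAccess n r n') → N2.nf = N1.nf)

/-- The shortcut rule as a relation between negotiations. -/
def ShortcutRule (N1 N2 : Negotiation Agent Atom Res) : Prop :=
  ∃ n r n' f, ShortcutRuleAt N1 N2 n r n' f

/-- The deterministic shortcut rule: the shortcut rule restricted to the case where the
unconditionally enabled atom has at most one result. -/
def DShortcutRule (N1 N2 : Negotiation Agent Atom Res) : Prop :=
  ∃ n r n' f, ShortcutRuleAt N1 N2 n r n' f ∧ (N1.results n').card ≤ 1

/-- A negotiation is irreducible if none of the four reduction rules is applicable. -/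
def Irreducible (N : Negotiation Agent Atom Res) : Prop :=
  ∀ N' : Negotiation Agent Atom Res,
    ¬ (MergeRule N N' ∨ IterationRule N N' ∨ UselessArcRule N N' ∨ ShortcutRule N N')

/-- The marking `x_n` that puts exactly the parties of `n` on `n`. -/
def xAt (N : Negotiation Agent Atom Res) (n : Atom) : Marking Agent Atom :=
  fun p => if p ∈ N.parties n then {n} else ∅

/-- An `(n, r)`-sequence: a finite occurrence sequence from `x_n` starting with the
outcome `(n, r)` all of whose atoms have their parties included in the parties of `n`. -/
def NRSeq (N : Negotiation Agent Atom Res) (n : Atom) (r : Res)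
    (σ : List (Atom × Res)) : Prop :=
  (∃ τ, σ = (n, r) :: τ) ∧ (∃ y, N.Seq (N.xAt n) σ y) ∧
    ∀ o ∈ σ, N.parties o.1 ⊆ N.parties n

/-- The index of the outcome `(n, r)`: the length of a longest (maximal) `(n,r)`-sequence
minus one. -/
noncomputable def outcomeIndex (N : Negotiation Agent Atom Res) (n : Atom) (r : Res) : ℕ :=
  sSup {l : ℕ | ∃ σ, N.NRSeq n r σ ∧ σ.length = l} - 1

/-- The index of a negotiation: the sum of the indices of all non-final outcomes. -/
noncomputable def negIndex (N : Negotiation Agent Atom Res) : ℕ :=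
  (N.atoms.filter (fun n => n ≠ N.nf)).sum
    (fun n => (N.results n).sum (fun r => N.outcomeIndex n r))

/-- An `n`-sequence: an `(n, r)`-sequence for some result `r` of `n`. -/
def NSeq (N : Negotiation Agent Atom Res) (n : Atom) (σ : List (Atom × Res)) : Prop :=
  (∃ r ∈ N.results n, ∃ τ, σ = (n, r) :: τ) ∧ (∃ y, N.Seq (N.xAt n) σ y) ∧
    ∀ o ∈ σ, N.parties o.1 ⊆ N.parties n

/-- A maximal `n`-sequence: it cannot be extended to a longer `n`-sequence. -/
def MaximalNSeq (N : Negotiation Agent Atom Res) (n : Atom) (σ : List (Atom × Res)) : Prop :=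
  N.NSeq n σ ∧ ∀ o : Atom × Res, ¬ N.NSeq n (σ ++ [o])

/-- An outcome `(n, r)` is uniform: all parties of `n` move to the same set of atoms. -/
def Uniform (N : Negotiation Agent Atom Res) (n : Atom) (r : Res) : Prop :=
  ∀ p ∈ N.parties n, ∀ q ∈ N.parties n, N.trans n p r = N.trans n q r

/-- A replication: all atoms have the same parties and all outcomes are uniform. -/
def Replication (N : Negotiation Agent Atom Res) : Prop :=
  (∀ n ∈ N.atoms, ∀ m ∈ N.atoms, N.parties n = N.parties m) ∧
  (∀ n ∈ N.atoms, ∀ r ∈ N.results n, N.Uniform n r)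

/-- A path of a negotiation: a list of triples `(nᵢ, pᵢ, rᵢ)` with `nᵢ₊₁ ∈ trans nᵢ pᵢ rᵢ`. -/
def IsPath (N : Negotiation Agent Atom Res) (π : List (Atom × Agent × Res)) : Prop :=
  (∀ t ∈ π, t.1 ∈ N.atoms ∧ t.2.1 ∈ N.parties t.1 ∧ t.2.2 ∈ N.results t.1) ∧
  π.Chain' (fun s t => t.1 ∈ N.trans s.1 s.2.1 s.2.2)

/-- A loop: a nonempty sequence of outcomes leading from some reachable marking back to itself. -/
def IsLoop (N : Negotiation Agent Atom Res) (σ : List (Atom × Res)) : Prop :=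
  σ ≠ [] ∧ ∃ x, N.Reachable x ∧ N.Seq x σ x

end Negotiation

namespace Negotiation
variable {Agent : Type u} {Atom : Type v} {Res : Type w}
variable [Fintype Agent] [DecidableEq Agent] [DecidableEq Atom] [DecidableEq Res]

private lemma seq_append' (N : Negotiation Agent Atom Res) :
    ∀ {x y z : Marking Agent Atom} {σ τ : List (Atom × Res)},
      N.Seq x σ y → N.Seq y τ z → N.Seq x (σ ++ τ) z := by
  intro x y z σ τ h1 h2
  induction h1 with
  | nil => simpa
  | cons hs _ ih => exact Seq.cons hs (ih h2)

private lemma seq_trace' (N : Negotiation Agent Atom Res)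
    {x y : Marking Agent Atom} {σ : List (Atom × Res)} (h : N.Seq x σ y) :
    ∀ p b, b ∈ y p → b ∈ x p ∨ ∃ c ∈ x p, Relation.TransGen N.Edge c b := by
  induction h with
  | nil => intro p b hb; exact Or.inl hb
  | cons hs _ ih =>
    rename_i x1 y1 z1 o1 σ1 rest1
    intro p b hb
    obtain ⟨hen, hr, hupd⟩ := hs
    rcases ih p b hb with hby | ⟨c, hcy, htg⟩
    · rw [hupd p] at hby
      by_cases hp : p ∈ N.parties o1.1
      · simp only [if_pos hp] at hby
        right
        refine ⟨_, hen.2 _ hp, Relation.TransGen.single ?_⟩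
        exact ⟨hen.1, N.trans_sub _ hen.1 _ hp _ hr hby, p, hp, _, hr, hby⟩
      · simp only [if_neg hp] at hby; exact Or.inl hby
    · rw [hupd p] at hcy
      by_cases hp : p ∈ N.parties o1.1
      · simp only [if_pos hp] at hcy
        right
        refine ⟨_, hen.2 _ hp, Relation.TransGen.head ?_ htg⟩
        exact ⟨hen.1, N.trans_sub _ hen.1 _ hp _ hr hcy, p, hp, _, hr, hcy⟩
      · simp only [if_neg hp] at hcy; exact Or.inr ⟨c, hcy, htg⟩

private lemma seq_enabled' (N : Negotiation Agent Atom Res)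
    {x y : Marking Agent Atom} {σ : List (Atom × Res)} (h : N.Seq x σ y) :
    ∀ o ∈ σ, ∃ τ w, N.Seq x τ w ∧ N.Enables w o.1 := by
  induction h with
  | nil => intro o ho; simp at ho
  | cons hs _ ih =>
    intro o ho
    rcases List.mem_cons.mp ho with rfl | ho
    · exact ⟨[], _, Seq.nil _, hs.1⟩
    · obtain ⟨τ, w, hseq, hen⟩ := ih o ho
      exact ⟨_ :: τ, w, Seq.cons hs hseq, hen⟩

private lemma seq_nodup' (N : Negotiation Agent Atom Res) (hacyc : N.Acyclic)
    {x y : Marking Agent Atom} {σ : List (Atom × Res)} (h : N.Seq x σ y) :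
    (σ.map Prod.fst).Nodup := by
  induction h with
  | nil => simp
  | cons hs hseq ih =>
    rename_i x' y' z' o σ'
    simp only [List.map_cons, List.nodup_cons]
    refine ⟨?_, ih⟩
    intro hmem
    rw [List.mem_map] at hmem
    obtain ⟨o', ho', heq⟩ := hmem
    obtain ⟨τ, w, hτ, hen⟩ := seq_enabled' N hseq o' ho'
    rw [heq] at hen
    obtain ⟨hen0, hr, hupd⟩ := hs
    obtain ⟨p, hp⟩ := N.parties_nonempty _ hen0.1
    have ha : o.1 ∈ w p := hen.2 p hp
    have hyp : y' p = N.trans o.1 p o.2 := by rw [hupd p, if_pos hp]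
    rcases seq_trace' N hτ p o.1 ha with h1 | ⟨c, hc, htg⟩
    · rw [hyp] at h1
      exact hacyc o.1 (Relation.TransGen.single ⟨hen0.1, hen0.1, p, hp, o.2, hr, h1⟩)
    · rw [hyp] at hc
      have hc_atoms := N.trans_sub _ hen0.1 _ hp _ hr hc
      exact hacyc o.1
        (Relation.TransGen.head ⟨hen0.1, hc_atoms, p, hp, o.2, hr, hc⟩ htg)

private lemma seq_mem_atoms' (N : Negotiation Agent Atom Res)
    {x y : Marking Agent Atom} {σ : List (Atom × Res)} (h : N.Seq x σ y) :
    ∀ o ∈ σ, o.1 ∈ N.atoms := by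
  intro o ho
  obtain ⟨τ, w, _, hen⟩ := seq_enabled' N h o ho
  exact hen.1

/-- In an acyclic negotiation every occurrence sequence has length at most the number of
atoms; no atom occurs more than once in any occurrence sequence from the initial
marking; and there are no livelocks. -/
theorem statement5 (N : Negotiation Agent Atom Res) (hacyc : N.Acyclic) :
    (∀ (x y : Marking Agent Atom) (σ : List (Atom × Res)),
      N.Seq x σ y → σ.length ≤ N.atoms.card) ∧
    (∀ (σ : List (Atom × Res)) (y : Marking Agent Atom), N.Seq N.x0 σ y →
      ∀ n : Atom, σ.countP (fun o => decide (o.1 = n)) ≤ 1) ∧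
    (∀ x : Marking Agent Atom,
      ¬ ((∃ σ : List (Atom × Res), σ ≠ [] ∧ N.Seq x σ x) ∧ ¬ ∃ τ, N.Seq x τ N.xf)) := by
  have part1 : ∀ (x y : Marking Agent Atom) (σ : List (Atom × Res)),
      N.Seq x σ y → σ.length ≤ N.atoms.card := by
    intro x y σ h
    have hnd := seq_nodup' N hacyc h
    have hsub : ∀ a ∈ (σ.map Prod.fst).toFinset, a ∈ N.atoms := by
      intro a ha
      rw [List.mem_toFinset, List.mem_map] at ha
      obtain ⟨o, ho, rfl⟩ := ha
      exact seq_mem_atoms' N h o ho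
    calc σ.length = (σ.map Prod.fst).length := (List.length_map _).symm
      _ = (σ.map Prod.fst).toFinset.card := (List.toFinset_card_of_nodup hnd).symm
      _ ≤ N.atoms.card := Finset.card_le_card hsub
  refine ⟨part1, ?_, ?_⟩
  · intro σ y h n
    have hnd := seq_nodup' N hacyc h
    have hcount : (σ.map Prod.fst).count n ≤ 1 :=
      List.nodup_iff_count_le_one.mp hnd n
    have : σ.countP (fun o => decide (o.1 = n)) = (σ.map Prod.fst).count n := by
      rw [List.count, List.countP_map]
      apply List.countP_congr
      intro o _
      simp
    omega
  · rintro x ⟨⟨σ, hne, hseq⟩, _⟩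
    have hlen : 1 ≤ σ.length := List.length_pos_iff.mpr hne
    have rep : ∀ k : ℕ, ∃ τ, N.Seq x τ x ∧ τ.length = k * σ.length := by
      intro k
      induction k with
      | zero => exact ⟨[], Seq.nil x, by simp⟩
      | succ k ih =>
        obtain ⟨τ, h1, h2⟩ := ih
        refine ⟨σ ++ τ, seq_append' N hseq h1, ?_⟩
        simp [h2, Nat.succ_mul]
        ring
    obtain ⟨τ, h1, h2⟩ := rep (N.atoms.card + 1)
    have hb := part1 x x τ h1
    have : N.atoms.card + 1 ≤ τ.length := by
      rw [h2]
      calc N.atoms.card + 1 = (N.atoms.card + 1) * 1 := by ring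
        _ ≤ (N.atoms.card + 1) * σ.length := Nat.mul_le_mul_left _ hlen
    omega

end Negotiation
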